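/- For every integer n ≥ 1, every ρ > 0, and every k with 0 ≤ k ≤ n, the polynomial l_{n,k}^ρ — defined as the unique polynomial in Π_n satisfying F_{n,j}^ρ(l_{n,k}^ρ) = δ_{jk} for j = 0,…,n (Kronecker delta) — has n distinct roots in the interval [0,1]. -/

import Mathlib

open MeasureTheory

/-- Euler Beta function `B(a,b) = ∫₀¹ t^(a-1) (1-t)^(b-1) dt`. -/
noncomputable def betaFn (a b : ℝ) : ℝ :=
  ∫ t in (0:ℝ)..1, t ^ (a - 1) * (1 - t) ^ (b - 1)

/-- The functionals `F_{n,k}^ρ`. -/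
noncomputable def Ffun (n k : ℕ) (ρ : ℝ) (f : ℝ → ℝ) : ℝ :=
  if k = 0 then f 0
  else if k = n then f 1
  else (betaFn ((k : ℝ) * ρ) (((n : ℝ) - (k : ℝ)) * ρ))⁻¹ *
    ∫ t in (0:ℝ)..1, t ^ ((k : ℝ) * ρ - 1) * (1 - t) ^ (((n : ℝ) - (k : ℝ)) * ρ - 1) * f t

/-- Bernstein basis polynomial `p_{n,k}(x)`. -/
noncomputable def bern (n k : ℕ) (x : ℝ) : ℝ :=
  (n.choose k : ℝ) * x ^ k * (1 - x) ^ (n - k)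

/-- The operator `U_n^ρ`. -/
noncomputable def Uop (n : ℕ) (ρ : ℝ) (f : ℝ → ℝ) (x : ℝ) : ℝ :=
  ∑ k ∈ Finset.range (n + 1), Ffun n k ρ f * bern n k x


open intervalIntegral Set Polynomial
open scoped Classical
open MeasureTheory intervalIntegral Set Polynomial
open scoped Classical

/-- integrability of beta-type weight times a continuous function -/
lemma integrable_w {a b : ℝ} (ha : 0 < a) (hb : 0 < b) {f : ℝ → ℝ}
    (hf : ContinuousOn f (Set.Icc 0 1)) :
    IntervalIntegrable (fun t => t ^ (a-1) * (1-t) ^ (b-1) * f t) volume 0 1 := by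
  have h1 : IntervalIntegrable (fun t : ℝ => t ^ (a-1) * (1-t) ^ (b-1)) volume 0 (1/2) := by
    apply IntervalIntegrable.mul_continuousOn (intervalIntegrable_rpow' (by linarith))
    · apply ContinuousOn.rpow_const (by fun_prop)
      intro x hx
      rw [Set.uIcc_of_le (by norm_num)] at hx
      obtain ⟨hx1, hx2⟩ := hx
      left; rw [sub_ne_zero]; intro h; rw [← h] at hx2; norm_num at hx2
  have h2 : IntervalIntegrable (fun t : ℝ => t ^ (a-1) * (1-t) ^ (b-1)) volume (1/2) 1 := by
    have hbint : IntervalIntegrable (fun t : ℝ => (1-t) ^ (b-1)) volume (1/2) 1 := by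
      have h := ((intervalIntegrable_rpow' (r := b-1) (by linarith) (a := 0) (b := 1/2)).comp_sub_left 1).symm
      have e1 : (1:ℝ) - 0 = 1 := by norm_num
      have e2 : (1:ℝ) - 1/2 = 1/2 := by norm_num
      rw [e1, e2] at h
      exact h
    have := hbint.continuousOn_mul (g := fun t : ℝ => t ^ (a-1)) ?_
    · simpa [mul_comm] using this
    · apply ContinuousOn.rpow_const (by fun_prop)
      intro x hx
      rw [Set.uIcc_of_le (by norm_num)] at hx
      obtain ⟨hx1, hx2⟩ := hx
      left; intro h; rw [h] at hx1; norm_num at hx1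
  have h3 := h1.trans h2
  have := h3.mul_continuousOn (g := f) ?_
  · exact this
  · rwa [Set.uIcc_of_le (by norm_num)]

lemma integral_pos_aux {g : ℝ → ℝ} (hint : IntervalIntegrable g volume 0 1)
    (h0 : ∀ t ∈ Ioo (0:ℝ) 1, 0 ≤ g t) (hfin : {t ∈ Ioo (0:ℝ) 1 | g t = 0}.Finite) :
    0 < ∫ t in (0:ℝ)..1, g t := by
  rw [integral_pos_iff_support_of_nonneg_ae' ?_ hint]
  · refine ⟨by norm_num, ?_⟩
    have hsub : Ioo (0:ℝ) 1 \ {t ∈ Ioo (0:ℝ) 1 | g t = 0} ⊆ Function.support g ∩ Ioc 0 1 := by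
      rintro t ⟨ht, ht2⟩
      refine ⟨?_, Ioo_subset_Ioc_self ht⟩
      intro h; exact ht2 ⟨ht, h⟩
    have hle := measure_mono (μ := volume) hsub
    have : volume (Ioo (0:ℝ) 1 \ {t ∈ Ioo (0:ℝ) 1 | g t = 0}) = volume (Ioo (0:ℝ) 1) := by
      exact measure_diff_null (μ := volume) (hfin.measure_zero _)
    rw [this] at hle
    refine lt_of_lt_of_le ?_ hle
    simp [Real.volume_Ioo]
  · have h1 : (Set.uIoc (0:ℝ) 1) = Ioc 0 1 := Set.uIoc_of_le (by norm_num)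
    rw [Filter.EventuallyLE, ae_restrict_iff' measurableSet_uIoc]
    filter_upwards [(Set.countable_singleton (1:ℝ)).ae_notMem volume] with t ht htI
    rw [h1] at htI
    rcases lt_or_eq_of_le htI.2 with h | h
    · exact h0 t ⟨htI.1, h⟩
    · exact absurd (by simp [h] : t ∈ ({1}: Set ℝ)) ht

noncomputable def Zpos (p : ℝ[X]) : ℕ := Multiset.card (p.roots.filter (fun x => 0 < x))

noncomputable def Spos (p : ℝ[X]) : Finset ℝ := p.roots.toFinset.filter (fun x => 0 < x)

lemma sum_count_le (M : Multiset ℝ) (T : Finset ℝ) :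
    ∑ x ∈ T, M.count x ≤ Multiset.card M := by
  classical
  have h0 : ∑ x ∈ T, M.count x = ∑ x ∈ T ∩ M.toFinset, M.count x := by
    refine (Finset.sum_subset Finset.inter_subset_left ?_).symm
    intro x hx hx2
    have : x ∉ M.toFinset := fun h => hx2 (Finset.mem_inter.2 ⟨hx, h⟩)
    simpa [Multiset.count_eq_zero] using fun h => this (Multiset.mem_toFinset.2 h)
  rw [h0, ← Multiset.toFinset_sum_count_eq M]
  exact Finset.sum_le_sum_of_subset Finset.inter_subset_right

lemma Zpos_eq_sum {p : ℝ[X]} : Zpos p = ∑ x ∈ Spos p, p.roots.count x := by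
  classical
  rw [Zpos, ← Multiset.toFinset_sum_count_eq, Multiset.toFinset_filter]
  refine Finset.sum_congr rfl fun x hx => ?_
  simp only [Spos, Finset.mem_filter] at hx
  rw [Multiset.count_filter]
  simp [hx.2]

lemma Spos_interleave (p : ℝ[X]) :
    (Spos p).card ≤ (Spos (derivative p) \ Spos p).card + 1 := by
  rcases eq_or_ne (derivative p) 0 with hp' | hp'
  · rw [eq_C_of_derivative_eq_zero hp']
    simp [Spos, roots_C]
  have hp : p ≠ 0 := ne_of_apply_ne derivative (by rwa [derivative_zero])
  refine Finset.card_le_diff_of_interleaved fun x hx y hy hxy hxy' => ?_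
  simp only [Spos, Finset.mem_filter, Multiset.mem_toFinset, mem_roots hp] at hx hy
  obtain ⟨z, hz1, hz2⟩ := exists_deriv_eq_zero hxy p.continuousOn (hx.1.trans hy.1.symm)
  refine ⟨z, ?_, hz1⟩
  simp only [Spos, Finset.mem_filter, Multiset.mem_toFinset, mem_roots hp']
  exact ⟨by rwa [IsRoot, ← p.deriv], lt_trans hx.2 hz1.1⟩

lemma Zpos_le_derivative (p : ℝ[X]) : Zpos p ≤ Zpos (derivative p) + 1 := by
  classical
  rcases eq_or_ne (derivative p) 0 with hp' | hp'
  · rw [eq_C_of_derivative_eq_zero hp']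
    simp [Zpos, roots_C]
  have hp : p ≠ 0 := ne_of_apply_ne derivative (by rwa [derivative_zero])
  calc Zpos p = ∑ x ∈ Spos p, p.roots.count x := Zpos_eq_sum
    _ = ∑ x ∈ Spos p, (p.roots.count x - 1 + 1) := by
        refine Finset.sum_congr rfl fun x hx => ?_
        refine (tsub_add_cancel_of_le (Nat.succ_le_iff.2 (Multiset.count_pos.2 ?_))).symm
        simp only [Spos, Finset.mem_filter, Multiset.mem_toFinset] at hx
        exact hx.1
    _ = (∑ x ∈ Spos p, (p.rootMultiplicity x - 1)) + (Spos p).card := by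
        simp only [Finset.sum_add_distrib, Finset.card_eq_sum_ones, count_roots]
    _ ≤ (∑ x ∈ Spos p, (derivative p).rootMultiplicity x)
        + ((Spos (derivative p) \ Spos p).card + 1) := by
        refine add_le_add (Finset.sum_le_sum fun x _ =>
          rootMultiplicity_sub_one_le_derivative_rootMultiplicity _ _) (Spos_interleave p)
    _ = (∑ x ∈ Spos p, (derivative p).roots.count x)
        + ((∑ x ∈ Spos (derivative p) \ Spos p, 1) + 1) := by
        simp only [← count_roots, Finset.card_eq_sum_ones]
    _ ≤ (∑ x ∈ Spos p, (derivative p).roots.count x)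
        + ((∑ x ∈ Spos (derivative p) \ Spos p, (derivative p).roots.count x) + 1) := by
        gcongr with x hx
        refine Nat.succ_le_iff.2 (Multiset.count_pos.2 ?_)
        simp only [Finset.mem_sdiff, Spos, Finset.mem_filter, Multiset.mem_toFinset] at hx
        exact hx.1.1
    _ = (∑ x ∈ Spos p ∪ (Spos (derivative p) \ Spos p), (derivative p).roots.count x) + 1 := by
        rw [Finset.sum_union Finset.disjoint_sdiff]
        ring
    _ ≤ Multiset.card ((derivative p).roots.filter (fun x => 0 < x)) + 1 := by
        have hposall : ∀ x ∈ Spos p ∪ (Spos (derivative p) \ Spos p), 0 < x := by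
          intro x hx
          rcases Finset.mem_union.1 hx with h | h
          · exact (Finset.mem_filter.1 h).2
          · exact (Finset.mem_filter.1 (Finset.mem_sdiff.1 h).1).2
        have : ∀ x ∈ Spos p ∪ (Spos (derivative p) \ Spos p),
            (derivative p).roots.count x
              = ((derivative p).roots.filter (fun x => 0 < x)).count x := by
          intro x hx
          rw [Multiset.count_filter]
          simp [hposall x hx]
        rw [Finset.sum_congr rfl this]
        exact Nat.add_le_add_right (sum_count_le _ _) 1
    _ = Zpos (derivative p) + 1 := rfl

lemma Zpos_X_mul {q : ℝ[X]} (hq : q ≠ 0) : Zpos (X * q) = Zpos q := by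
  unfold Zpos
  rw [roots_mul (mul_ne_zero X_ne_zero hq), roots_X, Multiset.filter_add]
  have : Multiset.filter (fun x => (0:ℝ) < x) {0} = 0 := by
    rw [Multiset.filter_eq_nil]
    intro a ha
    simp only [Multiset.mem_singleton] at ha
    simp [ha]
  rw [this]
  simp

lemma support_X_mul_card (q : ℝ[X]) : (X * q).support.card = q.support.card := by
  classical
  have h : (X * q).support = q.support.image (· + 1) := by
    ext n
    cases n with
    | zero => simp [mem_support_iff, mul_coeff_zero]
    | succ m => simp [mem_support_iff, coeff_X_mul]
  rw [h, Finset.card_image_of_injective _ (add_left_injective 1)]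

lemma support_derivative_card {p : ℝ[X]} (h0 : p.coeff 0 ≠ 0) :
    (derivative p).support.card + 1 ≤ p.support.card := by
  classical
  have h : ((derivative p).support).image (· + 1) = p.support.erase 0 := by
    ext n
    simp only [Finset.mem_image, Finset.mem_erase, mem_support_iff]
    constructor
    · rintro ⟨m, hm, rfl⟩
      rw [← mem_support_iff, Polynomial.mem_support_derivative, mem_support_iff] at hm
      exact ⟨by omega, hm⟩
    · rintro ⟨hn, hcn⟩
      obtain ⟨m, rfl⟩ : ∃ m, n = m + 1 := ⟨n - 1, by omega⟩
      refine ⟨m, ?_, rfl⟩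
      rw [← mem_support_iff, Polynomial.mem_support_derivative, mem_support_iff]
      exact hcn
  have hc := congrArg Finset.card h
  rw [Finset.card_image_of_injective _ (add_left_injective 1)] at hc
  rw [hc]
  have h0m : (0:ℕ) ∈ p.support := mem_support_iff.2 h0
  rw [Finset.card_erase_of_mem h0m]
  have : 1 ≤ p.support.card := Finset.card_pos.2 ⟨0, h0m⟩
  omega

lemma fewnomial : ∀ (N : ℕ) (p : ℝ[X]), p.natDegree ≤ N → p ≠ 0 →
    Zpos p + 1 ≤ p.support.card := by
  intro N
  induction N with
  | zero =>
    intro p hdeg hp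
    have : Zpos p = 0 := by
      have := Polynomial.eq_C_of_natDegree_eq_zero (Nat.le_zero.1 hdeg)
      rw [this, Zpos, roots_C]
      simp
    rw [this]
    exact Finset.card_pos.2 (nonempty_support_iff.2 hp)
  | succ N ih =>
    intro p hdeg hp
    rcases Nat.eq_zero_or_pos p.natDegree with h0 | h0
    · have : Zpos p = 0 := by
        rw [Polynomial.eq_C_of_natDegree_eq_zero h0, Zpos, roots_C]; simp
      rw [this]
      exact Finset.card_pos.2 (nonempty_support_iff.2 hp)
    rcases eq_or_ne (p.coeff 0) 0 with hc0 | hc0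
    · -- p = X * divX p
      have hfac : X * p.divX = p := by
        have := X_mul_divX_add p
        rwa [hc0, map_zero, add_zero] at this
      have hdvx : p.divX ≠ 0 := by
        intro h
        rw [← hfac, h, mul_zero] at hp
        exact hp rfl
      have hdeg' : p.divX.natDegree ≤ N := by
        rw [natDegree_divX_eq_natDegree_tsub_one]
        omega
      have := ih p.divX hdeg' hdvx
      rw [← hfac, Zpos_X_mul hdvx, support_X_mul_card]
      exact this
    · have hder : derivative p ≠ 0 := by
        intro h
        have := natDegree_eq_zero_of_derivative_eq_zero h
        omega
      have hdeg' : (derivative p).natDegree ≤ N := by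
        have := Polynomial.natDegree_derivative_lt (by omega : p.natDegree ≠ 0)
        omega
      have h1 := Zpos_le_derivative p
      have h2 := ih (derivative p) hdeg' hder
      have h3 := support_derivative_card hc0
      omega

/-- factor out the roots -/
lemma exists_rootfree_factor (p : ℝ[X]) (hp : p ≠ 0) :
    ∃ R : ℝ[X], p = (p.roots.map (fun a => X - C a)).prod * R ∧ R ≠ 0 ∧ R.roots = 0 := by
  obtain ⟨R, hR⟩ := p.prod_multiset_X_sub_C_dvd
  have hprod : (p.roots.map (fun a => X - C a)).prod ≠ 0 := by
    intro h
    rw [h, zero_mul] at hR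
    exact hp hR
  have hRne : R ≠ 0 := by
    intro h
    rw [h, mul_zero] at hR
    exact hp hR
  refine ⟨R, hR, hRne, ?_⟩
  have := roots_mul (p := (p.roots.map (fun a => X - C a)).prod) (q := R)
    (by rw [← hR]; exact hp)
  rw [← hR, roots_multiset_prod_X_sub_C] at this
  have h2 : p.roots = p.roots + R.roots := this
  have := left_eq_add.1 h2
  exact this

/-- a polynomial with no real roots has constant sign -/
lemma rootfree_sign {R : ℝ[X]} (hR : R ≠ 0) (h : R.roots = 0) (s t : ℝ) :
    0 < R.eval s * R.eval t := by
  have hne : ∀ x : ℝ, R.eval x ≠ 0 := by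
    intro x hx
    have : x ∈ R.roots := by rw [mem_roots hR]; exact hx
    rw [h] at this
    simp at this
  rcases lt_or_ge 0 (R.eval s * R.eval t) with h1 | h1
  · exact h1
  exfalso
  have hlt : R.eval s * R.eval t < 0 :=
    lt_of_le_of_ne h1 (mul_ne_zero (hne s) (hne t))
  have h0mem : (0:ℝ) ∈ Set.uIcc (R.eval s) (R.eval t) := by
    rcases mul_neg_iff.1 hlt with ⟨ha, hb⟩ | ⟨ha, hb⟩
    · exact Set.mem_uIcc.2 (Or.inr ⟨le_of_lt hb, le_of_lt ha⟩)
    · exact Set.mem_uIcc.2 (Or.inl ⟨le_of_lt ha, le_of_lt hb⟩)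
  have := intermediate_value_uIcc (f := fun x => R.eval x) (a := s) (b := t)
    (R.continuousOn)
  obtain ⟨z, _, hz⟩ := this h0mem
  exact hne z hz

/-- sign of a product of translates -/
lemma multiset_prod_sign (t : ℝ) (M : Multiset ℝ) (hne : ∀ x ∈ M, x ≠ t) :
    0 < (-1:ℝ) ^ (Multiset.card (M.filter (fun x => t < x))) *
      (M.map (fun x => t - x)).prod := by
  induction M using Multiset.induction with
  | empty => simp
  | cons a M ih =>
    have ha : a ≠ t := hne a (Multiset.mem_cons_self a M)
    have ihm := ih (fun x hx => hne x (Multiset.mem_cons_of_mem hx))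
    rw [Multiset.filter_cons, Multiset.map_cons, Multiset.prod_cons]
    rcases lt_or_gt_of_ne ha.symm with hlt | hgt
    · -- t < a
      rw [if_pos hlt]
      simp only [Multiset.card_add, Multiset.card_singleton]
      have : (-1:ℝ) ^ (1 + Multiset.card (M.filter (fun x => t < x)))
          = (-1) * (-1) ^ (Multiset.card (M.filter (fun x => t < x))) := by
        rw [pow_add, pow_one]
      rw [this]
      have h1 : 0 < (-1) * (t - a) := by nlinarith
      nlinarith [ihm]
    · -- a < t
      rw [if_neg (not_lt.2 (le_of_lt hgt))]
      simp only [zero_add]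
      have h1 : 0 < t - a := by linarith
      nlinarith [ihm]

lemma card_filter_eq_sum (M : Multiset ℝ) (q : ℝ → Prop) [DecidablePred q] :
    Multiset.card (M.filter q) = ∑ x ∈ M.toFinset.filter q, M.count x := by
  rw [← Multiset.toFinset_sum_count_eq, Multiset.toFinset_filter]
  refine Finset.sum_congr rfl fun x hx => ?_
  simp only [Finset.mem_filter] at hx
  rw [Multiset.count_filter]
  simp [hx.2]

noncomputable def oddRootsIn (p : ℝ[X]) (I : Set ℝ) : Finset ℝ :=
  p.roots.toFinset.filter (fun x => x ∈ I ∧ Odd (p.roots.count x))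

noncomputable def cnt (p : ℝ[X]) (I : Set ℝ) (t : ℝ) : ℕ :=
  ((oddRootsIn p I).filter (fun x => t ≤ x)).card

lemma parity_inner {p : ℝ[X]} (hp : p ≠ 0) {I : Set ℝ} {t : ℝ}
    (ht : p.eval t ≠ 0) :
    (-1:ℝ) ^ (Multiset.card (p.roots.filter (fun x => x ∈ I ∧ t < x)))
      = (-1) ^ (cnt p I t) := by
  have htne : ∀ x ∈ p.roots.toFinset, x ≠ t := by
    intro x hx hxt
    rw [Multiset.mem_toFinset, mem_roots hp] at hx
    rw [hxt] at hx
    exact ht hx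
  rw [card_filter_eq_sum, ← Finset.prod_pow_eq_pow_sum]
  have h1 : ∀ x ∈ p.roots.toFinset.filter (fun x => x ∈ I ∧ t < x),
      (-1:ℝ) ^ (p.roots.count x) = if Odd (p.roots.count x) then (-1:ℝ) else 1 := by
    intro x _
    split
    · exact Odd.neg_one_pow ‹_›
    · exact Even.neg_one_pow (Nat.not_odd_iff_even.1 ‹_›)
  rw [Finset.prod_congr rfl h1, ← Finset.prod_filter]
  have h2 : (p.roots.toFinset.filter (fun x => x ∈ I ∧ t < x)).filter
      (fun x => Odd (p.roots.count x)) = (oddRootsIn p I).filter (fun x => t ≤ x) := by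
    ext x
    simp only [Finset.mem_filter, oddRootsIn]
    constructor
    · rintro ⟨⟨hx, hxI, hxt⟩, hodd⟩
      exact ⟨⟨hx, hxI, hodd⟩, le_of_lt hxt⟩
    · rintro ⟨⟨hx, hxI, hodd⟩, hle⟩
      exact ⟨⟨hx, hxI, lt_of_le_of_ne hle (Ne.symm (htne x hx))⟩, hodd⟩
  rw [h2, Finset.prod_const, cnt]

lemma signLemma (p : ℝ[X]) (hp : p ≠ 0) (I : Set ℝ) (hI : I.OrdConnected) :
    ∃ ε : ℝ, ε ≠ 0 ∧ ∀ t ∈ I,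
      0 ≤ ε * ((-1) ^ (cnt p I t) * p.eval t) ∧
      (p.eval t ≠ 0 → 0 < ε * ((-1) ^ (cnt p I t) * p.eval t)) := by
  rcases Set.eq_empty_or_nonempty I with rfl | ⟨t₀, ht₀⟩
  · exact ⟨1, one_ne_zero, fun t ht => absurd ht (Set.notMem_empty t)⟩
  obtain ⟨R, hfac, hRne, hRroots⟩ := exists_rootfree_factor p hp
  set A : ℕ := Multiset.card (p.roots.filter (fun x => x ∉ I ∧ t₀ < x)) with hA
  refine ⟨(-1) ^ A * R.eval t₀, mul_ne_zero (by positivity)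
    (fun h => (rootfree_sign hRne hRroots t₀ t₀).ne' (by rw [h, mul_zero])), ?_⟩
  intro t ht
  have key : p.eval t ≠ 0 → 0 < ((-1) ^ A * R.eval t₀) * ((-1) ^ (cnt p I t) * p.eval t) := by
    intro hev
    -- t is not a root
    have htroot : ∀ x ∈ p.roots, x ≠ t := by
      intro x hx hxt
      rw [mem_roots hp] at hx
      rw [hxt] at hx
      exact hev hx
    -- eval p t = prod * eval R t
    have heval : p.eval t = (p.roots.map (fun x => t - x)).prod * R.eval t := by
      conv_lhs => rw [hfac]
      rw [eval_mul, eval_multiset_prod, Multiset.map_map]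
      congr 2
      refine Multiset.map_congr rfl fun x _ => ?_
      simp
    -- sign of the product
    have hprod := multiset_prod_sign t p.roots htroot
    -- split the filter
    have hsplit : Multiset.card (p.roots.filter (fun x => t < x))
        = Multiset.card (p.roots.filter (fun x => x ∈ I ∧ t < x))
          + Multiset.card (p.roots.filter (fun x => x ∉ I ∧ t < x)) := by
      have h := Multiset.filter_add_not (fun x => x ∈ I) (p.roots.filter (fun x => t < x))
      have hc := congrArg Multiset.card h
      rw [Multiset.card_add] at hc
      rw [← hc, Multiset.filter_filter, Multiset.filter_filter]
    -- the outer part does not depend on t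
    have houter : p.roots.filter (fun x => x ∉ I ∧ t < x)
        = p.roots.filter (fun x => x ∉ I ∧ t₀ < x) := by
      refine Multiset.filter_congr fun x hx => ?_
      constructor
      · rintro ⟨hxI, hxt⟩
        refine ⟨hxI, ?_⟩
        by_contra hle
        push_neg at hle
        exact hxI (hI.out ht ht₀ ⟨le_of_lt hxt, hle⟩)
      · rintro ⟨hxI, hxt⟩
        refine ⟨hxI, ?_⟩
        by_contra hle
        push_neg at hle
        exact hxI (hI.out ht₀ ht ⟨le_of_lt hxt, hle⟩)
    have hpow : (-1:ℝ) ^ (Multiset.card (p.roots.filter (fun x => t < x)))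
        = (-1) ^ (cnt p I t) * (-1) ^ A := by
      rw [hsplit, houter, pow_add, parity_inner hp hev, hA]
    have hR2 := rootfree_sign hRne hRroots t₀ t
    -- assemble
    have expand : ((-1:ℝ) ^ A * R.eval t₀) * ((-1) ^ (cnt p I t) * p.eval t)
        = ((-1) ^ (Multiset.card (p.roots.filter (fun x => t < x)))
            * (p.roots.map (fun x => t - x)).prod) * (R.eval t₀ * R.eval t) := by
      rw [heval, hpow]
      ring
    rw [expand]
    exact mul_pos hprod hR2
  refine ⟨?_, key⟩
  rcases eq_or_ne (p.eval t) 0 with h | h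
  · rw [h, mul_zero, mul_zero]
  · exact le_of_lt (key h)


lemma exists_ker {ι κ : Type} [Fintype ι] [Fintype κ] [DecidableEq ι]
    (M : Matrix κ ι ℝ) (h : Fintype.card κ < Fintype.card ι) :
    ∃ c : ι → ℝ, c ≠ 0 ∧ M.mulVec c = 0 := by
  by_contra hcon
  push_neg at hcon
  have hinj : Function.Injective M.mulVecLin := by
    rw [← LinearMap.ker_eq_bot, LinearMap.ker_eq_bot']
    intro c hc
    by_contra hne
    exact hcon c hne (by rwa [Matrix.mulVecLin_apply] at hc)
  have := LinearMap.finrank_le_finrank_of_injective hinj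
  rw [Module.finrank_pi, Module.finrank_pi] at this
  omega

lemma betaFn_pos {a b : ℝ} (ha : 0 < a) (hb : 0 < b) : 0 < betaFn a b := by
  rw [betaFn]
  apply integral_pos_aux
  · have := integrable_w ha hb (f := fun _ => (1:ℝ)) continuousOn_const
    simpa using this
  · intro t ht
    have h1 : (0:ℝ) < t ^ (a-1) := Real.rpow_pos_of_pos ht.1 _
    have h2 : (0:ℝ) < (1-t) ^ (b-1) := Real.rpow_pos_of_pos (by linarith [ht.2]) _
    positivity
  · have : {t | t ∈ Set.Ioo (0:ℝ) 1 ∧ t ^ (a-1) * (1-t) ^ (b-1) = 0} = ∅ := by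
      ext t
      simp only [Set.mem_setOf_eq, Set.mem_empty_iff_false, iff_false]
      rintro ⟨ht, heq⟩
      have h1 : (0:ℝ) < t ^ (a-1) := Real.rpow_pos_of_pos ht.1 _
      have h2 : (0:ℝ) < (1-t) ^ (b-1) := Real.rpow_pos_of_pos (by linarith [ht.2]) _
      nlinarith
    rw [this]
    exact Set.finite_empty


lemma core (n : ℕ) (ρ : ℝ) (hρ : 0 < ρ) (k : ℕ) (l : Polynomial ℝ) (hl0 : l ≠ 0)
    (hints : ∀ j ∈ (Finset.Ioo 0 n).erase k,
      ∫ t in (0:ℝ)..1, t ^ ((j:ℝ)*ρ - 1) * (1-t) ^ (((n:ℝ)-(j:ℝ))*ρ - 1) * l.eval t = 0) :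
    ((Finset.Ioo 0 n).erase k).card ≤ (oddRootsIn l (Set.Ioo 0 1)).card := by
  by_contra hcon
  push_neg at hcon
  set A := (Finset.Ioo 0 n).erase k with hA
  set D := oddRootsIn l (Set.Ioo 0 1) with hD
  set m := D.card with hm
  have hDsub : ∀ x ∈ D, x ∈ Set.Ioo (0:ℝ) 1 ∧ l.eval x = 0 := by
    intro x hx
    simp only [hD, oddRootsIn, Finset.mem_filter, Multiset.mem_toFinset, mem_roots hl0] at hx
    exact ⟨hx.2.1, hx.1⟩
  obtain ⟨E, hEsub, hEcard⟩ := Finset.exists_subset_card_eq (show m + 1 ≤ A.card from hcon)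
  have hEmem : ∀ e ∈ E, 0 < e ∧ e < n := by
    intro e he
    have := hEsub he
    rw [hA, Finset.mem_erase, Finset.mem_Ioo] at this
    exact this.2
  set v : ℝ → ℝ := fun t => (t / (1 - t)) ^ ρ with hv
  have hvpos : ∀ t ∈ Set.Ioo (0:ℝ) 1, 0 < v t := by
    intro t ht
    exact Real.rpow_pos_of_pos (div_pos ht.1 (by linarith [ht.2])) _
  have hvmono : StrictMonoOn v (Set.Ioo (0:ℝ) 1) := by
    intro s hs t ht hst
    have h1 : s / (1 - s) < t / (1 - t) := by
      rw [div_lt_div_iff₀ (by linarith [hs.2]) (by linarith [ht.2])]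
      nlinarith [hs.1, ht.2]
    exact Real.rpow_lt_rpow (le_of_lt (div_pos hs.1 (by linarith [hs.2]))) h1 hρ
  have hDIoo : ∀ x ∈ D, x ∈ Set.Ioo (0:ℝ) 1 := fun x hx => (hDsub x hx).1
  obtain ⟨c, hcne, hcker⟩ := exists_ker
    (M := fun (r : ↥D) (e : ↥E) => (v r) ^ ((e : ℕ) - 1))
    (by rw [Fintype.card_coe, Fintype.card_coe]; omega)
  set Q : Polynomial ℝ := ∑ e ∈ E.attach, Polynomial.C (c e) * Polynomial.X ^ ((e : ℕ) - 1)
    with hQ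
  have hsub1 : ∀ e : ↥E, 1 ≤ (e:ℕ) := fun e => (hEmem e e.2).1
  have hinj : ∀ e f : ↥E, (e:ℕ) - 1 = (f:ℕ) - 1 → e = f := by
    intro e f hef
    have := hsub1 e; have := hsub1 f
    exact Subtype.ext (by omega)
  have hQcoeff : ∀ e : ↥E, Q.coeff ((e:ℕ) - 1) = c e := by
    intro e
    rw [hQ, Polynomial.finset_sum_coeff]
    rw [Finset.sum_eq_single_of_mem e (E.mem_attach e)]
    · rw [Polynomial.coeff_C_mul_X_pow]
      simp
    · intro f _ hfe
      rw [Polynomial.coeff_C_mul_X_pow]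
      rw [if_neg]
      intro h
      exact hfe (hinj f e h.symm)
  have hQne : Q ≠ 0 := by
    obtain ⟨e₀, he₀⟩ := Function.ne_iff.1 hcne
    intro h
    apply he₀
    have := hQcoeff e₀
    rw [h] at this
    simpa using this.symm
  have hQsupp : Q.support.card ≤ m + 1 := by
    have hsubs : Q.support ⊆ E.attach.image (fun e : {x // x ∈ E} => (e:ℕ) - 1) := by
      intro d hd
      rw [Polynomial.mem_support_iff] at hd
      by_contra hdim
      apply hd
      rw [hQ, Polynomial.finset_sum_coeff]
      refine Finset.sum_eq_zero fun f _ => ?_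
      rw [Polynomial.coeff_C_mul_X_pow, if_neg]
      intro h
      exact hdim (Finset.mem_image.2 ⟨f, E.mem_attach f, h.symm⟩)
    calc Q.support.card ≤ (E.attach.image (fun e : {x // x ∈ E} => (e:ℕ) - 1)).card :=
          Finset.card_le_card hsubs
      _ ≤ E.attach.card := Finset.card_image_le
      _ = m + 1 := by rw [Finset.card_attach, hEcard]
  have hQZ : Zpos Q ≤ m := by
    have := fewnomial Q.natDegree Q le_rfl hQne
    omega
  have hQeval : ∀ y : ℝ, Q.eval y = ∑ e ∈ E.attach, c e * y ^ ((e:ℕ) - 1) := by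
    intro y
    rw [hQ, Polynomial.eval_finset_sum]
    simp
  have hQroot : ∀ r : ↥D, Q.eval (v r) = 0 := by
    intro r
    have hk := congrFun hcker r
    simp only [Matrix.mulVec, dotProduct, Pi.zero_apply,
      Finset.univ_eq_attach] at hk
    rw [hQeval, ← hk]
    exact Finset.sum_congr rfl fun e _ => mul_comm _ _
  have hvinjD : Set.InjOn v ↑D := hvmono.injOn.mono (fun x hx => hDIoo x hx)
  have himgcard : (D.image v).card = m := Finset.card_image_of_injOn hvinjD
  have hle : (D.image v).val ≤ Q.roots.filter (fun x => 0 < x) := by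
    rw [Multiset.le_iff_count]
    intro a
    by_cases ha : a ∈ D.image v
    · have h1 : (D.image v).val.count a = 1 :=
        Multiset.count_eq_one_of_mem (D.image v).nodup ha
      rw [h1]
      obtain ⟨x, hxD, rfl⟩ := Finset.mem_image.1 ha
      rw [Multiset.count_filter]
      rw [if_pos (hvpos x (hDIoo x hxD))]
      refine Multiset.one_le_count_iff_mem.2 ?_
      rw [mem_roots hQne]
      exact hQroot ⟨x, hxD⟩
    · have h1 : (D.image v).val.count a = 0 := by
        rw [Multiset.count_eq_zero]
        exact fun h => ha h
      rw [h1]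
      exact Nat.zero_le _
  have heq : Q.roots.filter (fun x => 0 < x) = (D.image v).val := by
    refine (Multiset.eq_of_le_of_card_le hle ?_).symm
    have h2 : Multiset.card (D.image v).val = m := himgcard
    rw [h2]
    exact hQZ
  have hoddQ : oddRootsIn Q (Set.Ioi 0) = D.image v := by
    ext a
    simp only [oddRootsIn, Finset.mem_filter, Multiset.mem_toFinset, Set.mem_Ioi]
    constructor
    · rintro ⟨haroot, hapos, hodd⟩
      have h1 : a ∈ Q.roots.filter (fun x => 0 < x) :=
        Multiset.mem_filter.2 ⟨haroot, hapos⟩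
      rw [heq] at h1
      exact h1
    · intro ha
      have hav : a ∈ (D.image v).val := ha
      have h1 : a ∈ Q.roots.filter (fun x => 0 < x) := heq ▸ hav
      obtain ⟨haroot, hapos⟩ := Multiset.mem_filter.1 h1
      refine ⟨haroot, hapos, ?_⟩
      have hcount : Q.roots.count a = 1 := by
        have hc1 : (Q.roots.filter (fun x => 0 < x)).count a = 1 := by
          rw [heq]
          exact Multiset.count_eq_one_of_mem (D.image v).nodup ha
        rwa [Multiset.count_filter, if_pos hapos] at hc1
      rw [hcount]
      exact odd_one
  have hcnt : ∀ t ∈ Set.Ioo (0:ℝ) 1, cnt Q (Set.Ioi 0) (v t) = cnt l (Set.Ioo 0 1) t := by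
    intro t ht
    rw [cnt, cnt, hoddQ, ← hD]
    have himg2 : (D.image v).filter (fun y => v t ≤ y) = (D.filter (fun x => t ≤ x)).image v := by
      ext y
      simp only [Finset.mem_filter, Finset.mem_image]
      constructor
      · rintro ⟨⟨x, hxD, rfl⟩, hvy⟩
        exact ⟨x, ⟨hxD, (hvmono.le_iff_le ht (hDIoo x hxD)).1 hvy⟩, rfl⟩
      · rintro ⟨x, ⟨hxD, hxt⟩, rfl⟩
        exact ⟨⟨x, hxD, rfl⟩, (hvmono.le_iff_le ht (hDIoo x hxD)).2 hxt⟩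
    rw [himg2, Finset.card_image_of_injOn (hvinjD.mono (fun x hx => (Finset.mem_filter.1 hx).1))]
  -- sign lemmas
  obtain ⟨εl, hεl, hsl⟩ := signLemma l hl0 (Set.Ioo 0 1) Set.ordConnected_Ioo
  obtain ⟨εQ, hεQ, hsQ⟩ := signLemma Q hQne (Set.Ioi 0) Set.ordConnected_Ioi
  -- the function G
  set G : ℝ → ℝ := fun t => ∑ e ∈ E.attach,
    c e * (t ^ (((e:ℕ):ℝ)*ρ - 1) * (1-t) ^ (((n:ℝ)-((e:ℕ):ℝ))*ρ - 1) * l.eval t) with hGdef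
  have hab : ∀ e : ↥E, 0 < ((e:ℕ):ℝ)*ρ ∧ 0 < ((n:ℝ)-((e:ℕ):ℝ))*ρ := by
    intro e
    obtain ⟨h1, h2⟩ := hEmem e e.2
    constructor
    · apply mul_pos _ hρ
      exact_mod_cast h1
    · apply mul_pos _ hρ
      have : ((e:ℕ):ℝ) < (n:ℝ) := by exact_mod_cast h2
      linarith
  have hterm_int : ∀ e ∈ E.attach, IntervalIntegrable
      (fun t => c e * (t ^ (((e:ℕ):ℝ)*ρ - 1) * (1-t) ^ (((n:ℝ)-((e:ℕ):ℝ))*ρ - 1) * l.eval t))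
      volume 0 1 := by
    intro e _
    exact (integrable_w (hab e).1 (hab e).2 (l.continuousOn_aeval)).const_mul (c e)
  have hGint : IntervalIntegrable G volume 0 1 := by
    have h2 := IntervalIntegrable.sum E.attach hterm_int
    have h3 : (∑ e ∈ E.attach, fun t : ℝ =>
        c e * (t ^ (((e:ℕ):ℝ)*ρ - 1) * (1-t) ^ (((n:ℝ)-((e:ℕ):ℝ))*ρ - 1) * l.eval t)) = G := by
      funext t
      simp [hGdef, Finset.sum_apply]
    rwa [h3] at h2
  have hGzero : ∫ t in (0:ℝ)..1, G t = 0 := by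
    simp only [hGdef]
    rw [intervalIntegral.integral_finset_sum hterm_int]
    refine Finset.sum_eq_zero fun e _ => ?_
    rw [intervalIntegral.integral_const_mul]
    rw [hints (e:ℕ) (hEsub e.2), mul_zero]
  -- pointwise identity
  have hGpt : ∀ t ∈ Set.Ioo (0:ℝ) 1, G t
      = (t ^ (ρ-1) * (1-t) ^ (((n:ℝ)-1)*ρ-1)) * (Q.eval (v t) * l.eval t) := by
    intro t ht
    have ht0 : (0:ℝ) < t := ht.1
    have ht1 : (0:ℝ) < 1 - t := by linarith [ht.2]
    have hterm : ∀ e : ↥E, t ^ (((e:ℕ):ℝ)*ρ - 1) * (1-t) ^ (((n:ℝ)-((e:ℕ):ℝ))*ρ - 1)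
        = (t ^ (ρ-1) * (1-t) ^ (((n:ℝ)-1)*ρ-1)) * (v t) ^ ((e:ℕ) - 1) := by
      intro e
      have he1 : 1 ≤ (e:ℕ) := hsub1 e
      have hcast : (((e:ℕ) - 1 : ℕ) : ℝ) = ((e:ℕ):ℝ) - 1 := by
        rw [Nat.cast_sub he1, Nat.cast_one]
      have hx : (0:ℝ) < t / (1 - t) := div_pos ht0 ht1
      have h1 : (v t) ^ ((e:ℕ) - 1) = (t/(1-t)) ^ (ρ * (((e:ℕ):ℝ) - 1)) := by
        rw [hv]
        rw [← Real.rpow_natCast ((t/(1-t)) ^ ρ) ((e:ℕ)-1), ← Real.rpow_mul (le_of_lt hx), hcast]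
      have h2 : (t/(1-t)) ^ (ρ * (((e:ℕ):ℝ) - 1))
          = t ^ (ρ * (((e:ℕ):ℝ) - 1)) * (1-t) ^ (-(ρ * (((e:ℕ):ℝ) - 1))) := by
        rw [Real.div_rpow (le_of_lt ht0) (le_of_lt ht1), Real.rpow_neg (le_of_lt ht1),
          div_eq_mul_inv]
      rw [h1, h2]
      rw [show t^(ρ-1) * (1-t)^(((n:ℝ)-1)*ρ-1)
            * (t ^ (ρ * (((e:ℕ):ℝ) - 1)) * (1-t) ^ (-(ρ * (((e:ℕ):ℝ) - 1))))
          = (t^(ρ-1) * t^(ρ*(((e:ℕ):ℝ)-1)))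
            * ((1-t)^(((n:ℝ)-1)*ρ-1) * (1-t)^(-(ρ*(((e:ℕ):ℝ)-1)))) from by ring]
      rw [← Real.rpow_add ht0, ← Real.rpow_add ht1]
      congr 1
      · congr 1; ring
      · congr 1; ring
    simp only [hGdef]
    rw [hQeval (v t), Finset.sum_mul, Finset.mul_sum]
    refine Finset.sum_congr rfl fun e _ => ?_
    rw [hterm e]
    ring
  -- the nonnegative function
  set g : ℝ → ℝ := fun t => (εl * εQ) * G t with hgdef
  have hg_int : IntervalIntegrable g volume 0 1 := hGint.const_mul _
  have hbase : ∀ t ∈ Set.Ioo (0:ℝ) 1, 0 < t ^ (ρ-1) * (1-t) ^ (((n:ℝ)-1)*ρ-1) := by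
    intro t ht
    have h1 : (0:ℝ) < t ^ (ρ-1) := Real.rpow_pos_of_pos ht.1 _
    have h2 : (0:ℝ) < (1-t) ^ (((n:ℝ)-1)*ρ-1) := Real.rpow_pos_of_pos (by linarith [ht.2]) _
    positivity
  have hg_key : ∀ t ∈ Set.Ioo (0:ℝ) 1, 0 ≤ g t ∧ (l.eval t ≠ 0 → Q.eval (v t) ≠ 0 → 0 < g t) := by
    intro t ht
    obtain ⟨P1, P1s⟩ := hsl t ht
    obtain ⟨P2, P2s⟩ := hsQ (v t) (hvpos t ht)
    rw [hcnt t ht] at P2 P2s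
    set c₀ := cnt l (Set.Ioo 0 1) t with hc₀
    have hu : ((-1:ℝ)^c₀) * ((-1:ℝ)^c₀) = 1 := by
      rw [← mul_pow]
      norm_num
    have hexp : g t = (t ^ (ρ-1) * (1-t) ^ (((n:ℝ)-1)*ρ-1)) *
        ((εl * ((-1)^c₀ * l.eval t)) * (εQ * ((-1)^c₀ * Q.eval (v t)))) := by
      simp only [hgdef]
      rw [hGpt t ht]
      linear_combination (-(εl * εQ * (t ^ (ρ-1) * (1-t) ^ (((n:ℝ)-1)*ρ-1)))
        * Q.eval (v t) * l.eval t) * hu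
    constructor
    · rw [hexp]
      exact mul_nonneg (le_of_lt (hbase t ht)) (mul_nonneg P1 P2)
    · intro hle hQe
      rw [hexp]
      exact mul_pos (hbase t ht) (mul_pos (P1s hle) (P2s hQe))
  have hfin : {t | t ∈ Set.Ioo (0:ℝ) 1 ∧ g t = 0}.Finite := by
    have hsubf : {t | t ∈ Set.Ioo (0:ℝ) 1 ∧ g t = 0}
        ⊆ {x | l.IsRoot x} ∪ {t | t ∈ Set.Ioo (0:ℝ) 1 ∧ Q.eval (v t) = 0} := by
      rintro t ⟨ht, hgt⟩
      by_contra hcon2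
      simp only [Set.mem_union, Set.mem_setOf_eq, not_or] at hcon2
      obtain ⟨h1, h2⟩ := hcon2
      have := (hg_key t ht).2 h1 (fun hq => h2 ⟨ht, hq⟩)
      exact this.ne' hgt
    refine Set.Finite.subset (Set.Finite.union (Polynomial.finite_setOf_isRoot hl0) ?_) hsubf
    have hIm : v '' {t | t ∈ Set.Ioo (0:ℝ) 1 ∧ Q.eval (v t) = 0} ⊆ {y | Q.IsRoot y} := by
      rintro y ⟨t, ⟨_, hq⟩, rfl⟩
      exact hq
    refine Set.Finite.of_finite_image
      (Set.Finite.subset (Polynomial.finite_setOf_isRoot hQne) hIm) ?_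
    exact hvmono.injOn.mono (fun t ht => ht.1)
  have hpos : 0 < ∫ t in (0:ℝ)..1, g t :=
    integral_pos_aux hg_int (fun t ht => (hg_key t ht).1) hfin
  have hzero : ∫ t in (0:ℝ)..1, g t = 0 := by
    simp only [hgdef]
    rw [intervalIntegral.integral_const_mul, hGzero, mul_zero]
  rw [hzero] at hpos
  exact lt_irrefl 0 hpos

/-- For `n ≥ 1`, `ρ > 0` and `0 ≤ k ≤ n`, the fundamental polynomial `l_{n,k}^ρ`,
i.e. the unique polynomial in `Π_n` with `F_{n,j}^ρ(l_{n,k}^ρ) = δ_{jk}`,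
has `n` distinct roots in `[0,1]`. -/
theorem fundamental_poly_roots (n : ℕ) (hn : 1 ≤ n) (ρ : ℝ) (hρ : 0 < ρ)
    (k : ℕ) (hk : k ≤ n)
    (l : Polynomial ℝ) (hldeg : l.natDegree ≤ n)
    (hl : ∀ j ≤ n, Ffun n j ρ (fun x => l.eval x) = if j = k then 1 else 0) :
    ∃ s : Finset ℝ, s.card = n ∧ ↑s ⊆ Set.Icc (0 : ℝ) 1 ∧
      ∀ x ∈ s, l.eval x = 0 := by
  have h0 : l.eval 0 = if 0 = k then 1 else 0 := by
    have := hl 0 (Nat.zero_le n)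
    simpa [Ffun] using this
  have hnn : l.eval 1 = if n = k then 1 else 0 := by
    have := hl n le_rfl
    rw [Ffun, if_neg (by omega), if_pos rfl] at this
    exact this
  have hl0 : l ≠ 0 := by
    rcases eq_or_ne k 0 with rfl | hk0
    · intro h
      rw [h] at h0
      simp at h0
    rcases eq_or_ne k n with rfl | hkn
    · intro h
      rw [h] at hnn
      rw [if_pos rfl] at hnn
      simp at hnn
    · -- interior case
      have hkmem := hl k hk
      rw [Ffun, if_neg hk0, if_neg hkn, if_pos rfl] at hkmem
      intro h
      rw [h] at hkmem
      simp at hkmem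
  have hints : ∀ j ∈ (Finset.Ioo 0 n).erase k,
      ∫ t in (0:ℝ)..1, t ^ ((j:ℝ)*ρ - 1) * (1-t) ^ (((n:ℝ)-(j:ℝ))*ρ - 1) * l.eval t = 0 := by
    intro j hj
    rw [Finset.mem_erase, Finset.mem_Ioo] at hj
    have hjk := hj.1
    have hj0 := hj.2.1
    have hjn := hj.2.2
    have h := hl j (le_of_lt hjn)
    rw [if_neg hjk, Ffun, if_neg (by omega), if_neg (by omega)] at h
    have hbne : betaFn ((j:ℝ)*ρ) (((n:ℝ)-(j:ℝ))*ρ) ≠ 0 := by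
      refine ne_of_gt (betaFn_pos ?_ ?_)
      · exact mul_pos (by exact_mod_cast hj0) hρ
      · refine mul_pos ?_ hρ
        have : (j:ℝ) < (n:ℝ) := by exact_mod_cast hjn
        linarith
    rcases mul_eq_zero.1 h with h1 | h1
    · exact absurd h1 (inv_ne_zero hbne)
    · exact h1
  have hcard := core n ρ hρ k l hl0 hints
  set D := oddRootsIn l (Set.Ioo 0 1) with hD
  have hDroots : ∀ x ∈ D, x ∈ Set.Ioo (0:ℝ) 1 ∧ l.eval x = 0 := by
    intro x hx
    simp only [hD, oddRootsIn, Finset.mem_filter, Multiset.mem_toFinset, mem_roots hl0] at hx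
    exact ⟨hx.2.1, hx.1⟩
  rcases eq_or_ne k 0 with rfl | hk0
  · -- k = 0 : roots are 1 and n-1 interior points
    have hA : ((Finset.Ioo 0 n).erase 0).card = n - 1 := by
      rw [Finset.erase_eq_of_notMem (by simp), Nat.card_Ioo]
      omega
    rw [hA] at hcard
    obtain ⟨D', hD'sub, hD'card⟩ := Finset.exists_subset_card_eq hcard
    have h1D : (1:ℝ) ∉ D' := by
      intro h
      have := (hDroots 1 (hD'sub h)).1
      simp at this
    refine ⟨insert 1 D', ?_, ?_, ?_⟩
    · rw [Finset.card_insert_of_notMem h1D, hD'card]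
      omega
    · intro x hx
      rcases Finset.mem_insert.1 hx with rfl | hx
      · exact ⟨zero_le_one, le_refl 1⟩
      · exact Set.mem_Icc_of_Ioo (hDroots x (hD'sub hx)).1
    · intro x hx
      rcases Finset.mem_insert.1 hx with rfl | hx
      · rw [hnn, if_neg (by omega)]
      · exact (hDroots x (hD'sub hx)).2
  rcases eq_or_ne k n with rfl | hkn
  · -- k = n
    have hA : ((Finset.Ioo 0 k).erase k).card = k - 1 := by
      rw [Finset.erase_eq_of_notMem (by simp), Nat.card_Ioo]
      omega
    rw [hA] at hcard
    obtain ⟨D', hD'sub, hD'card⟩ := Finset.exists_subset_card_eq hcard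
    have h0D : (0:ℝ) ∉ D' := by
      intro h
      have := (hDroots 0 (hD'sub h)).1
      simp at this
    refine ⟨insert 0 D', ?_, ?_, ?_⟩
    · rw [Finset.card_insert_of_notMem h0D, hD'card]
      omega
    · intro x hx
      rcases Finset.mem_insert.1 hx with rfl | hx
      · exact ⟨le_refl 0, zero_le_one⟩
      · exact Set.mem_Icc_of_Ioo (hDroots x (hD'sub hx)).1
    · intro x hx
      rcases Finset.mem_insert.1 hx with rfl | hx
      · rw [h0, if_neg (by omega)]
      · exact (hDroots x (hD'sub hx)).2
  · -- interior k
    have hkIoo : k ∈ Finset.Ioo 0 n := by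
      rw [Finset.mem_Ioo]
      omega
    have hA : ((Finset.Ioo 0 n).erase k).card = n - 2 := by
      rw [Finset.card_erase_of_mem hkIoo, Nat.card_Ioo]
      omega
    rw [hA] at hcard
    obtain ⟨D', hD'sub, hD'card⟩ := Finset.exists_subset_card_eq hcard
    have h1D : (1:ℝ) ∉ D' := by
      intro h
      have := (hDroots 1 (hD'sub h)).1
      simp at this
    have h0D : (0:ℝ) ∉ insert (1:ℝ) D' := by
      intro h
      rcases Finset.mem_insert.1 h with h | h
      · norm_num at h
      · have := (hDroots 0 (hD'sub h)).1
        simp at this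
    refine ⟨insert 0 (insert 1 D'), ?_, ?_, ?_⟩
    · rw [Finset.card_insert_of_notMem h0D, Finset.card_insert_of_notMem h1D, hD'card]
      omega
    · intro x hx
      rcases Finset.mem_insert.1 hx with rfl | hx
      · exact ⟨le_refl 0, zero_le_one⟩
      rcases Finset.mem_insert.1 hx with rfl | hx
      · exact ⟨zero_le_one, le_refl 1⟩
      · exact Set.mem_Icc_of_Ioo (hDroots x (hD'sub hx)).1
    · intro x hx
      rcases Finset.mem_insert.1 hx with rfl | hx
      · rw [h0, if_neg (by omega)]
      rcases Finset.mem_insert.1 hx with rfl | hx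
      · rw [hnn, if_neg (by omega)]
      · exact (hDroots x (hD'sub hx)).2
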